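/- arXiv:1011.2462 — 2 statements merged into one kernel-verified Lean document; each statement's English description precedes it below -/
import Mathlib

section
/- For distinct nonzero complex numbers t₁, t₂ with |t₁/u| < 1 and |t₂/u| < 1, and integers n₁ ≥ n₂, the identity χ_{n₁,n₂}(t₁,t₂) · 1/((1-u^{-1}t₁)(1-u^{-1}t₂)) = ∑_{(m₁,m₂)∈ℤ²} Θ(m₁-n₁)Θ(n₁-m₂)Θ(m₂-n₂) u^{n₁+n₂-m₁-m₂} χ_{m₁,m₂}(t₁,t₂) holds, where Θ(k)=1 for k ≥ 0 and 0 otherwise, and χ_{m₁,m₂}(t₁,t₂) = (t₁^{m₁+1}t₂^{m₂} - t₁^{m₂}t₂^{m₁+1})/(t₁-t₂). -/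
/-- The character of the irreducible `GL₂`-representation attached to a pair of
integers `(m₁, m₂)`, by the Weyl character formula. -/
noncomputable def gl2Char (m₁ m₂ : ℤ) (t₁ t₂ : ℂ) : ℂ :=
  (t₁ ^ (m₁ + 1) * t₂ ^ m₂ - t₁ ^ m₂ * t₂ ^ (m₁ + 1)) / (t₁ - t₂)

lemma baxter_auxA (t u : ℂ) (ht : t ≠ 0) (hu : u ≠ 0) (h : ‖t / u‖ < 1) (n : ℤ) :
    Summable (fun k : ℤ => ‖(if 0 ≤ k - n then (1 : ℂ) else 0) * u ^ (n - k) * t ^ k‖) ∧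
      ∑' k : ℤ, (if 0 ≤ k - n then (1 : ℂ) else 0) * u ^ (n - k) * t ^ k
        = t ^ n / (1 - t / u) := by
  set g : ℤ → ℂ := fun k => (if 0 ≤ k - n then (1 : ℂ) else 0) * u ^ (n - k) * t ^ k with hg
  have hinj : Function.Injective (fun j : ℕ => n + (j : ℤ)) := fun a b hab => by
    simpa using hab
  have hkey : ∀ j : ℕ, g (n + (j : ℤ)) = t ^ n * (t / u) ^ j := by
    intro j
    have h1 : (0 : ℤ) ≤ n + (j : ℤ) - n := by omega
    simp only [hg, if_pos h1, one_mul]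
    rw [show n - (n + (j : ℤ)) = -(j : ℤ) by ring, zpow_neg, zpow_natCast,
      zpow_add₀ ht, zpow_natCast, div_pow]
    field_simp
  have hoff : ∀ k : ℤ, k ∉ Set.range (fun j : ℕ => n + (j : ℤ)) → g k = 0 := by
    intro k hk
    have : ¬ (0 ≤ k - n) := by
      intro hc
      exact hk ⟨(k - n).toNat, by simp; omega⟩
    simp only [hg]
    rw [if_neg this, zero_mul, zero_mul]
  have hsupp : Function.support g ⊆ Set.range (fun j : ℕ => n + (j : ℤ)) := by
    intro k hk
    by_contra hc
    exact hk (hoff k hc)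
  constructor
  · show Summable (fun k : ℤ => ‖g k‖)
    rw [← hinj.summable_iff (fun k hk => by rw [hoff k hk]; simp)]
    apply Summable.congr ((summable_geometric_of_lt_one (norm_nonneg _) h).mul_left ‖t ^ (n : ℤ)‖)
    intro j
    simp only [Function.comp_apply, hkey j, norm_mul, norm_pow]
  · show ∑' k : ℤ, g k = t ^ n / (1 - t / u)
    rw [← hinj.tsum_eq hsupp]
    calc ∑' j : ℕ, g (n + (j : ℤ)) = ∑' j : ℕ, t ^ n * (t / u) ^ j := tsum_congr hkey
    _ = t ^ n * (1 - t / u)⁻¹ := by rw [tsum_mul_left, tsum_geometric_of_norm_lt_one h]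
    _ = t ^ n / (1 - t / u) := (div_eq_mul_inv _ _).symm

lemma baxter_auxB (t u : ℂ) (ht : t ≠ 0) (hu : u ≠ 0) (hc : t / u ≠ 1) (p q : ℤ)
    (hpq : p ≤ q) :
    Summable (fun k : ℤ =>
        ‖(if 0 ≤ q - k then (1 : ℂ) else 0) * (if 0 ≤ k - p then (1 : ℂ) else 0) *
          u ^ (p - k) * t ^ k‖) ∧
      ∑' k : ℤ, (if 0 ≤ q - k then (1 : ℂ) else 0) * (if 0 ≤ k - p then (1 : ℂ) else 0) *
          u ^ (p - k) * t ^ k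
        = t ^ p * (1 - (t / u) ^ (q - p + 1).toNat) / (1 - t / u) := by
  set g : ℤ → ℂ := fun k => (if 0 ≤ q - k then (1 : ℂ) else 0) *
      (if 0 ≤ k - p then (1 : ℂ) else 0) * u ^ (p - k) * t ^ k with hg
  have hoff : ∀ k : ℤ, k ∉ Finset.Icc p q → g k = 0 := by
    intro k hk
    rw [Finset.mem_Icc] at hk
    rcases not_and_or.mp hk with h' | h'
    · simp only [hg]
      rw [if_neg (show ¬ (0:ℤ) ≤ k - p by omega), mul_zero, zero_mul, zero_mul]
    · simp only [hg]
      rw [if_neg (show ¬ (0:ℤ) ≤ q - k by omega), zero_mul, zero_mul, zero_mul]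
  have hval : ∀ k ∈ Finset.Icc p q, g k = t ^ p * (t / u) ^ (k - p).toNat := by
    intro k hk
    rw [Finset.mem_Icc] at hk
    have hb : ((k - p).toNat : ℤ) = k - p := by omega
    simp only [hg, if_pos (by omega : (0:ℤ) ≤ q - k), if_pos (by omega : (0:ℤ) ≤ k - p),
      one_mul]
    rw [div_pow, ← zpow_natCast t, ← zpow_natCast u, hb,
      show k = p + (k - p) by ring, zpow_add₀ ht,
      show p - (p + (k - p)) = -(k - p) by ring, zpow_neg]
    have : u ^ (k - p) ≠ 0 := zpow_ne_zero _ hu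
    field_simp
    rw [add_sub_cancel_left]; ring
  constructor
  · show Summable (fun k : ℤ => ‖g k‖)
    apply summable_of_ne_finset_zero (s := Finset.Icc p q)
    intro k hk
    rw [hoff k hk, norm_zero]
  · show ∑' k : ℤ, g k = _
    rw [tsum_eq_sum hoff, Finset.sum_congr rfl hval]
    rw [Finset.sum_nbij' (fun k : ℤ => (k - p).toNat) (fun b : ℕ => p + (b : ℤ))
      (t := Finset.range (q - p + 1).toNat)
      (g := fun b : ℕ => t ^ p * (t / u) ^ b)
      (by intro k hk; simp only [Finset.mem_Icc] at hk; simp only [Finset.mem_range]; omega)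
      (by intro b hb; simp only [Finset.mem_range] at hb; simp only [Finset.mem_Icc]; omega)
      (by intro k hk; simp only [Finset.mem_Icc] at hk; omega)
      (by intro b hb; simp)
      (by intro k hk; rfl)]
    rw [← Finset.mul_sum, geom_sum_eq hc]
    have h1 : (1 : ℂ) - t / u ≠ 0 := fun h0 => hc (by linear_combination -h0)
    have h2 : t / u - 1 ≠ 0 := fun h0 => hc (by linear_combination h0)
    have key : ((t / u) ^ (q - p + 1).toNat - 1) / (t / u - 1)
        = (1 - (t / u) ^ (q - p + 1).toNat) / (1 - t / u) := by
      rw [div_eq_div_iff h2 h1]; ring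
    rw [key]; ring

/-- Eigenfunction property of the `q = 0` Baxter operator for `gl₂` (Pieri rule):
`χ_{n₁,n₂}(t₁,t₂)·((1-u⁻¹t₁)(1-u⁻¹t₂))⁻¹
  = ∑_{(m₁,m₂)∈ℤ²} Θ(m₁-n₁)Θ(n₁-m₂)Θ(m₂-n₂) u^{n₁+n₂-m₁-m₂} χ_{m₁,m₂}(t₁,t₂)`. -/
theorem gl2_baxter_q0_eigen (t₁ t₂ u : ℂ) (ht₁ : t₁ ≠ 0) (ht₂ : t₂ ≠ 0) (ht : t₁ ≠ t₂)
    (hu : u ≠ 0) (h₁ : ‖t₁ / u‖ < 1) (h₂ : ‖t₂ / u‖ < 1) (n₁ n₂ : ℤ) (hn : n₂ ≤ n₁) :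
    gl2Char n₁ n₂ t₁ t₂ * (1 / ((1 - u⁻¹ * t₁) * (1 - u⁻¹ * t₂))) =
      ∑' m : ℤ × ℤ,
        (if 0 ≤ m.1 - n₁ then (1 : ℂ) else 0) * (if 0 ≤ n₁ - m.2 then (1 : ℂ) else 0) *
          (if 0 ≤ m.2 - n₂ then (1 : ℂ) else 0) * u ^ (n₁ + n₂ - m.1 - m.2) *
          gl2Char m.1 m.2 t₁ t₂ := by
  have hc₁ : t₁ / u ≠ 1 := fun h0 => by rw [h0] at h₁; simp at h₁
  have hc₂ : t₂ / u ≠ 1 := fun h0 => by rw [h0] at h₂; simp at h₂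
  have hD₁ : (1 : ℂ) - t₁ / u ≠ 0 := fun h0 => hc₁ (by linear_combination -h0)
  have hD₂ : (1 : ℂ) - t₂ / u ≠ 0 := fun h0 => hc₂ (by linear_combination -h0)
  have htt : t₁ - t₂ ≠ 0 := sub_ne_zero.mpr ht
  obtain ⟨hA₁s, hA₁v⟩ := baxter_auxA t₁ u ht₁ hu h₁ n₁
  obtain ⟨hB₁s, hB₁v⟩ := baxter_auxA t₂ u ht₂ hu h₂ n₁
  obtain ⟨hA₂s, hA₂v⟩ := baxter_auxB t₂ u ht₂ hu hc₂ n₂ n₁ hn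
  obtain ⟨hB₂s, hB₂v⟩ := baxter_auxB t₁ u ht₁ hu hc₁ n₂ n₁ hn
  set g₁ : ℤ → ℂ := fun k => (if 0 ≤ k - n₁ then (1 : ℂ) else 0) * u ^ (n₁ - k) * t₁ ^ k
  set h₁' : ℤ → ℂ := fun k => (if 0 ≤ k - n₁ then (1 : ℂ) else 0) * u ^ (n₁ - k) * t₂ ^ k
  set g₂ : ℤ → ℂ := fun k => (if 0 ≤ n₁ - k then (1 : ℂ) else 0) *
      (if 0 ≤ k - n₂ then (1 : ℂ) else 0) * u ^ (n₂ - k) * t₂ ^ k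
  set h₂' : ℤ → ℂ := fun k => (if 0 ≤ n₁ - k then (1 : ℂ) else 0) *
      (if 0 ≤ k - n₂ then (1 : ℂ) else 0) * u ^ (n₂ - k) * t₁ ^ k
  have hA1n : Summable (fun k : ℤ => ‖t₁ * g₁ k‖) := by
    apply (hA₁s.mul_left ‖t₁‖).congr
    intro k; exact (norm_mul _ _).symm
  have hB1n : Summable (fun k : ℤ => ‖t₂ * h₁' k‖) := by
    apply (hB₁s.mul_left ‖t₂‖).congr
    intro k; exact (norm_mul _ _).symm
  have hterm : ∀ m : ℤ × ℤ,
      (if 0 ≤ m.1 - n₁ then (1 : ℂ) else 0) * (if 0 ≤ n₁ - m.2 then (1 : ℂ) else 0) *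
          (if 0 ≤ m.2 - n₂ then (1 : ℂ) else 0) * u ^ (n₁ + n₂ - m.1 - m.2) *
          gl2Char m.1 m.2 t₁ t₂
        = ((t₁ * g₁ m.1) * g₂ m.2 - (t₂ * h₁' m.1) * h₂' m.2) * (t₁ - t₂)⁻¹ := by
    intro m
    have hsplit : u ^ (n₁ + n₂ - m.1 - m.2) = u ^ (n₁ - m.1) * u ^ (n₂ - m.2) := by
      rw [← zpow_add₀ hu]; ring_nf
    have e₁ : t₁ ^ (m.1 + 1) = t₁ * t₁ ^ m.1 := by
      rw [zpow_add_one₀ ht₁]; ring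
    have e₂ : t₂ ^ (m.1 + 1) = t₂ * t₂ ^ m.1 := by
      rw [zpow_add_one₀ ht₂]; ring
    simp only [gl2Char, g₁, g₂, h₁', h₂', hsplit, e₁, e₂, div_eq_mul_inv]
    ring
  rw [tsum_congr hterm, tsum_mul_right,
    Summable.tsum_sub (summable_mul_of_summable_norm (f := fun k => t₁ * g₁ k) (g := g₂) hA1n hA₂s)
      (summable_mul_of_summable_norm (f := fun k => t₂ * h₁' k) (g := h₂') hB1n hB₂s),
    ← tsum_mul_tsum_of_summable_norm (f := fun k => t₁ * g₁ k) (g := g₂) hA1n hA₂s,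
    ← tsum_mul_tsum_of_summable_norm (f := fun k => t₂ * h₁' k) (g := h₂') hB1n hB₂s,
    tsum_mul_left, tsum_mul_left, hA₁v, hB₁v, hA₂v, hB₂v]
  set M : ℕ := (n₁ - n₂ + 1).toNat with hM
  have hMc : (M : ℤ) = n₁ - n₂ + 1 := by omega
  have k₁ : t₁ ^ n₂ * (t₁ / u) ^ M = t₁ ^ n₁ * t₁ * u ^ (-(n₁ - n₂ + 1)) := by
    have e₁ : t₁ ^ n₂ * t₁ ^ (n₁ - n₂ + 1) = t₁ ^ n₁ * t₁ := by
      rw [← zpow_add₀ ht₁, show n₂ + (n₁ - n₂ + 1) = n₁ + 1 by ring, zpow_add_one₀ ht₁]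
    rw [← zpow_natCast (t₁ / u), hMc, div_zpow, zpow_neg, div_eq_mul_inv, ← mul_assoc, e₁]
  have k₂ : t₂ ^ n₂ * (t₂ / u) ^ M = t₂ ^ n₁ * t₂ * u ^ (-(n₁ - n₂ + 1)) := by
    have e₂ : t₂ ^ n₂ * t₂ ^ (n₁ - n₂ + 1) = t₂ ^ n₁ * t₂ := by
      rw [← zpow_add₀ ht₂, show n₂ + (n₁ - n₂ + 1) = n₁ + 1 by ring, zpow_add_one₀ ht₂]
    rw [← zpow_natCast (t₂ / u), hMc, div_zpow, zpow_neg, div_eq_mul_inv, ← mul_assoc, e₂]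
  have hcan : t₁ ^ n₁ * t₁ * (t₂ ^ n₂ * (t₂ / u) ^ M)
      = t₂ ^ n₁ * t₂ * (t₁ ^ n₂ * (t₁ / u) ^ M) := by
    rw [k₁, k₂]; ring
  have eχ₁ : t₁ ^ (n₁ + 1) = t₁ ^ n₁ * t₁ := by rw [zpow_add_one₀ ht₁]
  have eχ₂ : t₂ ^ (n₁ + 1) = t₂ ^ n₁ * t₂ := by rw [zpow_add_one₀ ht₂]
  have hiu₁ : (1 : ℂ) - u⁻¹ * t₁ = 1 - t₁ / u := by rw [inv_mul_eq_div]
  have hiu₂ : (1 : ℂ) - u⁻¹ * t₂ = 1 - t₂ / u := by rw [inv_mul_eq_div]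
  rw [gl2Char, eχ₁, eχ₂, hiu₁, hiu₂]
  set a := t₁ ^ n₁ with ha
  set b := t₁ ^ n₂ with hb
  set c := t₂ ^ n₁ with hc
  set d := t₂ ^ n₂ with hd
  set X₁ := (t₁ / u) ^ M with hX₁
  set X₂ := (t₂ / u) ^ M with hX₂
  set D₁ := 1 - t₁ / u with hDD₁
  set D₂ := 1 - t₂ / u with hDD₂
  clear_value a b c d X₁ X₂ D₁ D₂
  field_simp
  linear_combination hcan
end

section
/- For distinct real λ₁, λ₂, distinct real t₁, t₂ and real x₁ > x₂: the doubly-indexed sum/integral identity ∫_{ℝ²} Θ(y₁-x₁)Θ(x₁-y₂)Θ(y₂-x₂) e^{is(x₁+x₂-y₁-y₂)} Ψ(y₁,y₂) dy₁dy₂ = (1/((s-λ₁)(s-λ₂))) · (1/i²) · Ψ(x₁,x₂) holds for Ψ(y₁,y₂) = (e^{i(λ₁y₁+λ₂y₂)} - e^{i(λ₂y₁+λ₁y₂)})/(i(λ₁-λ₂))·Θ(y₁-y₂), provided Im(s) < 0 so all integrals converge. -/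
open Complex MeasureTheory Set Filter

lemma integrableOn_cexp_Ioi {c : ℂ} (hc : c.re < 0) (a : ℝ) :
    IntegrableOn (fun y : ℝ => Complex.exp (c * y)) (Ioi a) := by
  have hg : IntegrableOn (fun y : ℝ => Real.exp (c.re * y)) (Ioi a) := by
    have := exp_neg_integrableOn_Ioi a (neg_pos.mpr hc)
    simpa using this
  refine hg.integrable.mono' ?_ ?_
  · exact (Complex.continuous_exp.comp (continuous_const.mul Complex.continuous_ofReal)).aestronglyMeasurable
  · filter_upwards with y
    simp [Complex.norm_exp]

lemma tail_integral {c : ℂ} (hc : c.re < 0) (a : ℝ) :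
    ∫ y in Ioi a, Complex.exp (c * y) = -Complex.exp (c * a) / c := by
  have hc0 : c ≠ 0 := fun h => by simp [h] at hc
  have hderiv : ∀ x ∈ Ioi a, HasDerivAt (fun y : ℝ => Complex.exp (c * y) / c)
      (Complex.exp (c * x)) x := by
    intro x _
    have h : HasDerivAt (fun w : ℂ => Complex.exp (c * w) / c) (Complex.exp (c * x)) (x : ℂ) := by
      have h1 := (((hasDerivAt_id ((x : ℝ) : ℂ)).const_mul c).cexp).div_const c
      refine h1.congr_deriv ?_
      simp only [id, mul_one]
      field_simp
    exact h.comp_ofReal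
  have hcont : ContinuousOn (fun y : ℝ => Complex.exp (c * y) / c) (Ici a) :=
    ((Complex.continuous_exp.comp (continuous_const.mul Complex.continuous_ofReal)).div_const c).continuousOn
  have htend : Tendsto (fun y : ℝ => Complex.exp (c * y) / c) atTop (nhds 0) := by
    rw [tendsto_zero_iff_norm_tendsto_zero]
    have heq : (fun y : ℝ => ‖Complex.exp (c * y) / c‖) = fun y => Real.exp (c.re * y) / ‖c‖ := by
      funext z; simp [Complex.norm_exp]
    rw [heq]
    have h1 : Tendsto (fun y : ℝ => Real.exp (c.re * y)) atTop (nhds 0) :=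
      Real.tendsto_exp_atBot.comp <| (tendsto_const_mul_atBot_of_neg hc).mpr tendsto_id
    simpa using h1.div_const ‖c‖
  have := integral_Ioi_of_hasDerivAt_of_tendsto (hcont.continuousWithinAt (self_mem_Ici)) hderiv
    (integrableOn_cexp_Ioi hc a) htend
  rw [this]; ring

lemma finite_integral {c : ℂ} (hc0 : c ≠ 0) {a b : ℝ} (hab : a ≤ b) :
    ∫ y in Icc a b, Complex.exp (c * y) = (Complex.exp (c * b) - Complex.exp (c * a)) / c := by
  rw [integral_Icc_eq_integral_Ioc, ← intervalIntegral.integral_of_le hab]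
  exact integral_exp_mul_complex hc0

/-- The `ℓ=1` eigenfunction property of the elementary Baxter operator acting on the
elementary `gl₂`-Whittaker function
`Ψ(y₁,y₂) = (e^{i(λ₁y₁+λ₂y₂)} - e^{i(λ₂y₁+λ₁y₂)})/(i(λ₁-λ₂))·Θ(y₁-y₂)`:
`∫_{ℝ²} Θ(y₁-x₁)Θ(x₁-y₂)Θ(y₂-x₂) e^{is(x₁+x₂-y₁-y₂)} Ψ(y₁,y₂) dy
  = (1/((s-λ₁)(s-λ₂)))·(1/i²)·Ψ(x₁,x₂)` for `Im s < 0`. -/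
theorem elementary_baxter_eigen_gl2 (l₁ l₂ : ℝ) (hl : l₁ ≠ l₂) (t₁ t₂ : ℝ) (ht : t₁ ≠ t₂)
    (s : ℂ) (hs : s.im < 0) (x₁ x₂ : ℝ) (hx : x₂ < x₁) :
    (∫ y : ℝ × ℝ,
        (if 0 ≤ y.1 - x₁ then (1 : ℂ) else 0) * (if 0 ≤ x₁ - y.2 then (1 : ℂ) else 0) *
          (if 0 ≤ y.2 - x₂ then (1 : ℂ) else 0) *
          Complex.exp (Complex.I * s * ((x₁ : ℂ) + x₂ - y.1 - y.2)) *
          ((Complex.exp (Complex.I * (l₁ * y.1 + l₂ * y.2 : ℝ)) -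
              Complex.exp (Complex.I * (l₂ * y.1 + l₁ * y.2 : ℝ))) /
              (Complex.I * ((l₁ : ℂ) - l₂)) *
            (if 0 ≤ y.1 - y.2 then (1 : ℂ) else 0))) =
      (1 / ((s - l₁) * (s - l₂))) * (1 / Complex.I ^ 2) *
        ((Complex.exp (Complex.I * (l₁ * x₁ + l₂ * x₂ : ℝ)) -
            Complex.exp (Complex.I * (l₂ * x₁ + l₁ * x₂ : ℝ))) /
            (Complex.I * ((l₁ : ℂ) - l₂)) *
          (if 0 ≤ x₁ - x₂ then (1 : ℂ) else 0)) := by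
  set c₁ : ℂ := Complex.I * ((l₁ : ℂ) - s) with hc₁def
  set c₂ : ℂ := Complex.I * ((l₂ : ℂ) - s) with hc₂def
  have hc₁re : c₁.re < 0 := by simp [hc₁def]; linarith
  have hc₂re : c₂.re < 0 := by simp [hc₂def]; linarith
  have hc₁0 : c₁ ≠ 0 := fun h => by simp [h] at hc₁re
  have hc₂0 : c₂ ≠ 0 := fun h => by simp [h] at hc₂re
  have hΔ : ((l₁ : ℂ) - l₂) ≠ 0 := by
    simpa using sub_ne_zero.mpr ((Complex.ofReal_injective.ne_iff).mpr hl)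
  have hI : (Complex.I : ℂ) ≠ 0 := Complex.I_ne_zero
  have key : ∀ (μ ν y₁ y₂ : ℝ),
      Complex.exp (Complex.I * s * ((x₁ : ℂ) + x₂ - y₁ - y₂)) *
        Complex.exp (Complex.I * (μ * y₁ + ν * y₂ : ℝ)) =
      Complex.exp (Complex.I * s * ((x₁ : ℂ) + x₂)) *
        (Complex.exp ((Complex.I * ((μ : ℂ) - s)) * y₁) *
          Complex.exp ((Complex.I * ((ν : ℂ) - s)) * y₂)) := by
    intro μ ν y₁ y₂
    rw [← Complex.exp_add, ← Complex.exp_add, ← Complex.exp_add]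
    congr 1
    push_cast
    ring
  set F₁ : ℝ → ℂ := indicator (Ici x₁) (fun y => Complex.exp (c₁ * y)) with hF₁
  set F₂ : ℝ → ℂ := indicator (Ici x₁) (fun y => Complex.exp (c₂ * y)) with hF₂
  set G₁ : ℝ → ℂ := indicator (Icc x₂ x₁) (fun y => Complex.exp (c₁ * y)) with hG₁
  set G₂ : ℝ → ℂ := indicator (Icc x₂ x₁) (fun y => Complex.exp (c₂ * y)) with hG₂
  set c₀ : ℂ := Complex.exp (Complex.I * s * ((x₁ : ℂ) + x₂)) / (Complex.I * ((l₁ : ℂ) - l₂))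
    with hc₀
  have hfun : (fun y : ℝ × ℝ =>
        (if 0 ≤ y.1 - x₁ then (1 : ℂ) else 0) * (if 0 ≤ x₁ - y.2 then (1 : ℂ) else 0) *
          (if 0 ≤ y.2 - x₂ then (1 : ℂ) else 0) *
          Complex.exp (Complex.I * s * ((x₁ : ℂ) + x₂ - y.1 - y.2)) *
          ((Complex.exp (Complex.I * (l₁ * y.1 + l₂ * y.2 : ℝ)) -
              Complex.exp (Complex.I * (l₂ * y.1 + l₁ * y.2 : ℝ))) /
              (Complex.I * ((l₁ : ℂ) - l₂)) *
            (if 0 ≤ y.1 - y.2 then (1 : ℂ) else 0))) =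
      fun y : ℝ × ℝ => c₀ * (F₁ y.1 * G₂ y.2 - F₂ y.1 * G₁ y.2) := by
    funext p
    obtain ⟨y₁, y₂⟩ := p
    simp only [hF₁, hF₂, hG₁, hG₂, indicator_apply, mem_Ici, mem_Icc, hc₀, sub_nonneg]
    by_cases h1 : x₁ ≤ y₁
    · by_cases h2 : x₂ ≤ y₂
      · by_cases h3 : y₂ ≤ x₁
        · have h4 : y₂ ≤ y₁ := le_trans h3 h1
          have e1 := key l₁ l₂ y₁ y₂
          have e2 := key l₂ l₁ y₁ y₂
          rw [hc₁def, hc₂def]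
          simp only [h1, h2, h3, h4, and_self, if_true, true_and, and_true, one_mul, mul_one]
          push_cast at e1 e2 ⊢
          linear_combination (e1 - e2) / (Complex.I * ((l₁ : ℂ) - l₂))
        · simp [h3]
      · simp [h2]
    · simp [h1]
  rw [hfun]
  have hFi₁ : Integrable F₁ := by
    rw [hF₁]
    exact (((integrableOn_Ici_iff_integrableOn_Ioi).mpr (integrableOn_cexp_Ioi hc₁re x₁))).integrable_indicator measurableSet_Ici
  have hFi₂ : Integrable F₂ := by
    rw [hF₂]
    exact (((integrableOn_Ici_iff_integrableOn_Ioi).mpr (integrableOn_cexp_Ioi hc₂re x₁))).integrable_indicator measurableSet_Ici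
  have hcont : ∀ c : ℂ, Continuous fun y : ℝ => Complex.exp (c * y) := fun c =>
    Complex.continuous_exp.comp (continuous_const.mul Complex.continuous_ofReal)
  have hGi₁ : Integrable G₁ := by
    rw [hG₁]
    exact (((hcont c₁).integrableOn_Icc)).integrable_indicator measurableSet_Icc
  have hGi₂ : Integrable G₂ := by
    rw [hG₂]
    exact (((hcont c₂).integrableOn_Icc)).integrable_indicator measurableSet_Icc
  rw [MeasureTheory.Measure.volume_eq_prod, integral_const_mul,
    integral_sub (hFi₁.mul_prod hGi₂) (hFi₂.mul_prod hGi₁),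
    integral_prod_mul, integral_prod_mul]
  have hintF : ∀ {c : ℂ}, c.re < 0 → ∫ y : ℝ, indicator (Ici x₁) (fun y => Complex.exp (c * y)) y
      = -Complex.exp (c * x₁) / c := by
    intro c hc
    rw [integral_indicator measurableSet_Ici, integral_Ici_eq_integral_Ioi, tail_integral hc]
  have hintG : ∀ {c : ℂ}, c ≠ 0 → ∫ y : ℝ, indicator (Icc x₂ x₁) (fun y => Complex.exp (c * y)) y
      = (Complex.exp (c * x₁) - Complex.exp (c * x₂)) / c := by
    intro c hc
    rw [integral_indicator measurableSet_Icc, finite_integral hc hx.le]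
  rw [hF₁, hF₂, hG₁, hG₂, hintF hc₁re, hintF hc₂re, hintG hc₁0, hintG hc₂0]
  rw [if_pos (by linarith : (0:ℝ) ≤ x₁ - x₂)]
  have e1 : Complex.exp (Complex.I * (l₁ * x₁ + l₂ * x₂ : ℝ)) =
      Complex.exp (Complex.I * s * ((x₁ : ℂ) + x₂)) *
        (Complex.exp (c₁ * x₁) * Complex.exp (c₂ * x₂)) := by
    rw [hc₁def, hc₂def, ← Complex.exp_add, ← Complex.exp_add]; congr 1; push_cast; ring
  have e2 : Complex.exp (Complex.I * (l₂ * x₁ + l₁ * x₂ : ℝ)) =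
      Complex.exp (Complex.I * s * ((x₁ : ℂ) + x₂)) *
        (Complex.exp (c₂ * x₁) * Complex.exp (c₁ * x₂)) := by
    rw [hc₁def, hc₂def, ← Complex.exp_add, ← Complex.exp_add]; congr 1; push_cast; ring
  have h4 : (s - (l₁ : ℂ)) * (s - (l₂ : ℂ)) = -(c₁ * c₂) := by
    rw [hc₁def, hc₂def]
    linear_combination ((l₁ : ℂ) - s) * ((l₂ : ℂ) - s) * Complex.I_sq
  have hI2 : (1 : ℂ) / Complex.I ^ 2 = -1 := by rw [Complex.I_sq]; norm_num
  rw [e1, e2, hc₀, h4, hI2]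
  field_simp
  ring
end
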